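/- For all natural numbers j, k, n with n ≤ jk/2, we have p(k, j, n) ≥ p(k, j, n−1), where p(k, j, n) is the number of partitions of n into at most j parts each of size at most k (unimodality of Gaussian binomial coefficients up to the middle). -/

import Mathlib

open Finset

def wsum (T : Finset ℕ) : ℕ := ∑ t ∈ T, t

def cwt (m : ℕ) (T : Finset ℕ) : ℚ := ∑ t ∈ T, (2 * (t:ℚ) + 1 - m)

def dnMv (T : Finset ℕ) (t : ℕ) : Finset ℕ := insert (t-1) (T.erase t)
def upMv (T : Finset ℕ) (t : ℕ) : Finset ℕ := insert (t+1) (T.erase t)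

def dnSet (T : Finset ℕ) : Finset ℕ := T.filter (fun t => t ≠ 0 ∧ t-1 ∉ T)
def upSet (T : Finset ℕ) : Finset ℕ := T.filter (fun t => t+1 ∉ T)

noncomputable def Xop (m : ℕ) : Module.End ℚ (Finset ℕ → ℚ) where
  toFun f := fun T => ∑ t ∈ dnSet T, ((m:ℚ) - t) * f (dnMv T t)
  map_add' f g := by
    funext T
    simp [mul_add, Finset.sum_add_distrib]
  map_smul' c f := by
    funext T
    simp only [Pi.smul_apply, smul_eq_mul, RingHom.id_apply]
    rw [Finset.mul_sum]
    exact Finset.sum_congr rfl fun t _ => by ring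

noncomputable def Yop : Module.End ℚ (Finset ℕ → ℚ) where
  toFun f := fun T => ∑ t ∈ upSet T, ((t:ℚ) + 1) * f (upMv T t)
  map_add' f g := by
    funext T
    simp [mul_add, Finset.sum_add_distrib]
  map_smul' c f := by
    funext T
    simp only [Pi.smul_apply, smul_eq_mul, RingHom.id_apply]
    rw [Finset.mul_sum]
    exact Finset.sum_congr rfl fun t _ => by ring

lemma Xop_apply (m : ℕ) (f : Finset ℕ → ℚ) (T : Finset ℕ) :
    Xop m f T = ∑ t ∈ dnSet T, ((m:ℚ) - t) * f (dnMv T t) := rfl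

lemma Yop_apply (f : Finset ℕ → ℚ) (T : Finset ℕ) :
    Yop f T = ∑ t ∈ upSet T, ((t:ℚ) + 1) * f (upMv T t) := rfl

-- basic move facts
lemma mem_dnSet {T : Finset ℕ} {t : ℕ} : t ∈ dnSet T ↔ t ∈ T ∧ t ≠ 0 ∧ t-1 ∉ T := by
  simp [dnSet]

lemma mem_upSet {T : Finset ℕ} {t : ℕ} : t ∈ upSet T ↔ t ∈ T ∧ t+1 ∉ T := by
  simp [upSet]

lemma up_dn {T : Finset ℕ} {t : ℕ} (ht : t ∈ dnSet T) :
    (t-1) ∈ upSet (dnMv T t) ∧ upMv (dnMv T t) (t-1) = T := by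
  obtain ⟨hT, h0, hp⟩ := mem_dnSet.1 ht
  have hsub : t - 1 + 1 = t := Nat.succ_pred_eq_of_pos (Nat.pos_of_ne_zero h0)
  have htne : t ≠ t - 1 := fun h => hp (h ▸ hT)
  constructor
  · rw [mem_upSet]
    constructor
    · exact mem_insert_self _ _
    · rw [hsub]
      simp only [dnMv, mem_insert, not_or]
      exact ⟨htne, notMem_erase _ _⟩
  · rw [upMv, dnMv, hsub, Finset.erase_insert (by simp [hp])]
    exact Finset.insert_erase hT

lemma dn_up {T : Finset ℕ} {u : ℕ} (hu : u ∈ upSet T) :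
    (u+1) ∈ dnSet (upMv T u) ∧ dnMv (upMv T u) (u+1) = T := by
  obtain ⟨hT, hs⟩ := mem_upSet.1 hu
  have hune : u + 1 ≠ u := Nat.succ_ne_self u
  constructor
  · rw [mem_dnSet]
    refine ⟨mem_insert_self _ _, Nat.succ_ne_zero u, ?_⟩
    simp only [Nat.add_sub_cancel, upMv, mem_insert, not_or]
    exact ⟨Ne.symm hune, notMem_erase _ _⟩
  · rw [dnMv, upMv, Nat.add_sub_cancel, Finset.erase_insert (by simp [hs])]
    exact Finset.insert_erase hT

lemma wsum_upMv {T : Finset ℕ} {u : ℕ} (hu : u ∈ upSet T) : wsum (upMv T u) = wsum T + 1 := by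
  obtain ⟨hT, hs⟩ := mem_upSet.1 hu
  have h1 : wsum (upMv T u) = (u+1) + ∑ x ∈ T.erase u, x := by
    rw [upMv, wsum, Finset.sum_insert (by simp [hs])]
  have h2 : (∑ x ∈ T.erase u, x) + u = wsum T := Finset.sum_erase_add T _ hT
  omega

lemma wsum_dnMv {T : Finset ℕ} {t : ℕ} (ht : t ∈ dnSet T) : wsum (dnMv T t) + 1 = wsum T := by
  obtain ⟨hT, h0, hp⟩ := mem_dnSet.1 ht
  have h1 : wsum (dnMv T t) = (t-1) + ∑ x ∈ T.erase t, x := by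
    rw [dnMv, wsum, Finset.sum_insert (by simp [hp])]
  have h2 : (∑ x ∈ T.erase t, x) + t = wsum T := Finset.sum_erase_add T _ hT
  omega

lemma card_upMv {T : Finset ℕ} {u : ℕ} (hu : u ∈ upSet T) : (upMv T u).card = T.card := by
  obtain ⟨hT, hs⟩ := mem_upSet.1 hu
  rw [upMv, Finset.card_insert_of_notMem (by simp [hs]), Finset.card_erase_of_mem hT]
  have := Finset.card_pos.2 ⟨u, hT⟩
  omega

lemma card_dnMv {T : Finset ℕ} {t : ℕ} (ht : t ∈ dnSet T) : (dnMv T t).card = T.card := by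
  obtain ⟨hT, h0, hp⟩ := mem_dnSet.1 ht
  rw [dnMv, Finset.card_insert_of_notMem (by simp [hp]), Finset.card_erase_of_mem hT]
  have := Finset.card_pos.2 ⟨t, hT⟩
  omega

lemma cwt_upMv (m : ℕ) {T : Finset ℕ} {u : ℕ} (hu : u ∈ upSet T) :
    cwt m (upMv T u) = cwt m T + 2 := by
  obtain ⟨hT, hs⟩ := mem_upSet.1 hu
  rw [upMv, cwt, Finset.sum_insert (by simp [hs]), Finset.sum_erase_eq_sub hT]
  rw [cwt]
  push_cast
  ring

lemma cross_mem_left {T : Finset ℕ} {t u : ℕ} :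
    (t ∈ dnSet T ∧ u ∈ (upSet (dnMv T t)).erase (t-1)) ↔
    (t ∈ T ∧ t ≠ 0 ∧ t-1 ∉ T ∧ u ∈ T ∧ u ≠ t ∧ u+1 ∉ T ∧ u+1 ≠ t-1) := by
  simp only [mem_dnSet, Finset.mem_erase, mem_upSet, dnMv, Finset.mem_insert, not_or]
  push_neg
  constructor
  · rintro ⟨⟨hT, h0, hp⟩, hne, (h | ⟨hune, huT⟩), hne2, hnin⟩
    · exact absurd h hne
    · refine ⟨hT, h0, hp, huT, hune, ?_, hne2⟩
      rcases eq_or_ne (u+1) t with h | h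
      · omega
      · exact hnin h
  · rintro ⟨hT, h0, hp, huT, hune, hu1, hne2⟩
    have hut1 : u ≠ t - 1 := fun h => hp (h ▸ huT)
    exact ⟨⟨hT, h0, hp⟩, hut1, Or.inr ⟨hune, huT⟩, hne2, fun _ => hu1⟩

lemma cross_mem_right {T : Finset ℕ} {t u : ℕ} :
    (t ∈ (dnSet (upMv T u)).erase (u+1) ∧ u ∈ upSet T) ↔
    (t ∈ T ∧ t ≠ 0 ∧ t-1 ∉ T ∧ u ∈ T ∧ u ≠ t ∧ u+1 ∉ T ∧ u+1 ≠ t-1) := by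
  simp only [mem_dnSet, Finset.mem_erase, mem_upSet, upMv, Finset.mem_insert, not_or]
  push_neg
  constructor
  · rintro ⟨⟨hne, (h | ⟨htu, htT⟩), h0, hne2, hnin⟩, huT, hu1⟩
    · exact absurd h hne
    · refine ⟨htT, h0, ?_, huT, fun h => htu h.symm, hu1, fun h => hne2 h.symm⟩
      rcases eq_or_ne (t-1) u with h | h
      · intro _; apply hu1; have : u + 1 = t := by omega
        exact this ▸ htT
      · exact hnin h
  · rintro ⟨hT, h0, hp, huT, hune, hu1, hne2⟩
    have htu1 : t ≠ u + 1 := fun h => hu1 (h ▸ hT)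
    exact ⟨⟨htu1, Or.inr ⟨fun h => hune h.symm, hT⟩, h0, fun h => hne2 h.symm,
      fun _ => hp⟩, huT, hu1⟩

lemma cross_set_eq {T : Finset ℕ} {t u : ℕ}
    (h : t ∈ T ∧ t ≠ 0 ∧ t-1 ∉ T ∧ u ∈ T ∧ u ≠ t ∧ u+1 ∉ T ∧ u+1 ≠ t-1) :
    upMv (dnMv T t) u = dnMv (upMv T u) t := by
  obtain ⟨hT, h0, hp, huT, hune, hu1, hne2⟩ := h
  have hut1 : u ≠ t - 1 := fun hh => hp (hh ▸ huT)
  have htu1 : t ≠ u + 1 := fun hh => hu1 (hh ▸ hT)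
  rw [upMv, dnMv, upMv, dnMv]
  rw [Finset.erase_insert_of_ne (Ne.symm hut1), Finset.erase_insert_of_ne (Ne.symm htu1)]
  ext x
  simp only [Finset.mem_insert, Finset.mem_erase]
  tauto

lemma diag_sum (m : ℕ) (T : Finset ℕ) :
    (∑ t ∈ dnSet T, ((t:ℚ) * ((m:ℚ) - t)))
      - (∑ u ∈ upSet T, (((u:ℚ)+1) * ((m:ℚ) - ((u:ℚ)+1)))) = cwt m T := by
  set q : ℕ → ℚ := fun t => (t:ℚ) * ((m:ℚ) - t) with hq
  have h1 : (∑ t ∈ dnSet T, q t) + ∑ t ∈ T.filter (fun t => ¬(t ≠ 0 ∧ t-1 ∉ T)), q t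
      = ∑ t ∈ T, q t := by
    rw [dnSet]
    exact Finset.sum_filter_add_sum_filter_not T _ q
  have h2 : (∑ u ∈ upSet T, q (u+1)) + ∑ u ∈ T.filter (fun u => ¬(u+1 ∉ T)), q (u+1)
      = ∑ u ∈ T, q (u+1) := by
    rw [upSet]
    exact Finset.sum_filter_add_sum_filter_not T _ _
  have h3 : ∑ t ∈ T.filter (fun t => t ≠ 0 ∧ t-1 ∈ T), q t
      = ∑ t ∈ T.filter (fun t => ¬(t ≠ 0 ∧ t-1 ∉ T)), q t := by
    apply Finset.sum_subset
    · intro x hx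
      rw [Finset.mem_filter] at hx ⊢
      exact ⟨hx.1, fun h => h.2 hx.2.2⟩
    · intro x hx hnx
      rw [Finset.mem_filter] at hx hnx
      have hx0 : x = 0 := by
        by_contra h0
        rcases not_and.1 hx.2 h0 |> not_not.1 with hmem
        exact hnx ⟨hx.1, h0, hmem⟩
      simp [hq, hx0]
  have h4 : ∑ u ∈ T.filter (fun u => ¬(u+1 ∉ T)), q (u+1)
      = ∑ t ∈ T.filter (fun t => t ≠ 0 ∧ t-1 ∈ T), q t := by
    apply Finset.sum_bij' (fun u (_ : u ∈ T.filter (fun u => ¬(u+1 ∉ T))) => u + 1)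
      (fun t (_ : t ∈ T.filter (fun t => t ≠ 0 ∧ t-1 ∈ T)) => t - 1)
    · intro u hu
      rw [Finset.mem_filter] at hu ⊢
      rcases hu with ⟨huT, hmem⟩
      rw [not_not] at hmem
      exact ⟨hmem, by omega, by simpa using huT⟩
    · intro t ht
      rw [Finset.mem_filter] at ht ⊢
      rcases ht with ⟨htT, h0, hmem⟩
      refine ⟨hmem, ?_⟩
      rw [not_not]
      have : t - 1 + 1 = t := by omega
      rw [this]; exact htT
    · intro u _; omega
    · intro t ht
      rw [Finset.mem_filter] at ht
      omega
    · intro u _; rfl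
  have h5 : ∑ t ∈ T, (q t - q (t+1)) = cwt m T := by
    rw [cwt]
    apply Finset.sum_congr rfl
    intro t _
    simp only [hq]
    push_cast
    ring
  rw [Finset.sum_sub_distrib] at h5
  have hup : ∑ u ∈ upSet T, (((u:ℚ)+1) * ((m:ℚ) - ((u:ℚ)+1))) = ∑ u ∈ upSet T, q (u+1) := by
    apply Finset.sum_congr rfl
    intro u _
    simp only [hq]
    push_cast
    ring
  rw [hup]
  linarith [h1, h2, h3, h4, h5]

lemma comm_apply (m : ℕ) (f : Finset ℕ → ℚ) (T : Finset ℕ) :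
    Xop m (Yop f) T = Yop (Xop m f) T + cwt m T * f T := by
  have hL : Xop m (Yop f) T
      = (∑ t ∈ dnSet T, ((t:ℚ) * ((m:ℚ) - t))) * f T
        + ∑ t ∈ dnSet T, ∑ u ∈ (upSet (dnMv T t)).erase (t-1),
            ((m:ℚ)-t) * (((u:ℚ)+1) * f (upMv (dnMv T t) u)) := by
    rw [Xop_apply, Finset.sum_mul, ← Finset.sum_add_distrib]
    apply Finset.sum_congr rfl
    intro t ht
    obtain ⟨hmem, hset⟩ := up_dn ht
    have h0 : t ≠ 0 := (mem_dnSet.1 ht).2.1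
    rw [Yop_apply, ← Finset.add_sum_erase _ _ hmem, hset]
    have hc : (((t-1:ℕ):ℚ) + 1) = (t:ℚ) := by
      have h1 : t - 1 + 1 = t := Nat.succ_pred_eq_of_pos (Nat.pos_of_ne_zero h0)
      norm_cast
    rw [mul_add, hc, Finset.mul_sum]
    ring
  have hR : Yop (Xop m f) T
      = (∑ u ∈ upSet T, (((u:ℚ)+1) * ((m:ℚ) - ((u:ℚ)+1)))) * f T
        + ∑ u ∈ upSet T, ∑ t ∈ (dnSet (upMv T u)).erase (u+1),
            ((m:ℚ)-t) * (((u:ℚ)+1) * f (dnMv (upMv T u) t)) := by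
    rw [Yop_apply, Finset.sum_mul, ← Finset.sum_add_distrib]
    apply Finset.sum_congr rfl
    intro u hu
    obtain ⟨hmem, hset⟩ := dn_up hu
    rw [Xop_apply, ← Finset.add_sum_erase _ _ hmem, hset]
    rw [mul_add, Finset.mul_sum]
    push_cast
    have : ∀ t' ∈ (dnSet (upMv T u)).erase (u+1),
        ((u:ℚ)+1) * (((m:ℚ)-t') * f (dnMv (upMv T u) t'))
          = ((m:ℚ)-t') * (((u:ℚ)+1) * f (dnMv (upMv T u) t')) := by
      intro t' _; ring
    rw [Finset.sum_congr rfl this]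
    ring
  have hcross : ∑ t ∈ dnSet T, ∑ u ∈ (upSet (dnMv T t)).erase (t-1),
        ((m:ℚ)-t) * (((u:ℚ)+1) * f (upMv (dnMv T t) u))
      = ∑ u ∈ upSet T, ∑ t ∈ (dnSet (upMv T u)).erase (u+1),
        ((m:ℚ)-t) * (((u:ℚ)+1) * f (dnMv (upMv T u) t)) := by
    rw [Finset.sum_comm' (fun t u => cross_mem_left.trans cross_mem_right.symm)]
    apply Finset.sum_congr rfl
    intro u hu
    apply Finset.sum_congr rfl
    intro t ht
    have hP := cross_mem_right.1 ⟨ht, hu⟩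
    rw [cross_set_eq hP]
  rw [hL, hR, hcross, ← diag_sum m T]
  ring

lemma Yop_supp {f : Finset ℕ → ℚ} {T : Finset ℕ} (h : Yop f T ≠ 0) :
    ∃ u ∈ upSet T, f (upMv T u) ≠ 0 := by
  rw [Yop_apply] at h
  obtain ⟨u, hu, hne⟩ := Finset.exists_ne_zero_of_sum_ne_zero h
  exact ⟨u, hu, fun h0 => hne (by simp [h0])⟩

lemma sl2_vanish (m : ℕ) (v : Finset ℕ → ℚ) (γ : ℚ) (s0 : ℕ)
    (hsupp : ∀ T, v T ≠ 0 → cwt m T = γ ∧ wsum T = s0)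
    (hX : Xop m v = 0) (hγ : γ < 0) : v = 0 := by
  classical
  have hA : ∀ (i : ℕ) (T : Finset ℕ), ((Yop^i) v) T ≠ 0 →
      cwt m T = γ - 2*i ∧ wsum T + i = s0 := by
    intro i
    induction i with
    | zero =>
      intro T hT
      rw [pow_zero, Module.End.one_apply] at hT
      obtain ⟨h1, h2⟩ := hsupp T hT
      exact ⟨by rw [h1]; push_cast; ring, by omega⟩
    | succ i ih =>
      intro T hT
      rw [pow_succ', Module.End.mul_apply] at hT
      obtain ⟨u, hu, hne⟩ := Yop_supp hT
      obtain ⟨h1, h2⟩ := ih _ hne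
      have h3 := cwt_upMv m hu
      have h4 := wsum_upMv hu
      constructor
      · rw [h1] at h3
        push_cast
        linarith [h3]
      · omega
  have hB : ∀ (i : ℕ), Xop m ((Yop^(i+1)) v)
      = (((i:ℚ)+1) * (γ - i)) • ((Yop^i) v) := by
    intro i
    induction i with
    | zero =>
      funext T
      rw [pow_one, pow_zero, Module.End.one_apply]
      rw [comm_apply m v T, hX]
      simp only [map_zero, Pi.zero_apply, zero_add, Pi.smul_apply, smul_eq_mul]
      rcases eq_or_ne (v T) 0 with h | h
      · rw [h]; ring
      · rw [(hsupp T h).1]; push_cast; ring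
    | succ i ih =>
      have e1 : (Yop^(i+1+1)) v = Yop ((Yop^(i+1)) v) := by
        rw [pow_succ', Module.End.mul_apply]
      have e2 : Yop ((Yop^i) v) = (Yop^(i+1)) v := by
        rw [pow_succ', Module.End.mul_apply]
      funext T
      rw [e1, comm_apply m _ T, ih, map_smul]
      simp only [Pi.smul_apply, smul_eq_mul]
      rw [e2]
      set z := ((Yop^(i+1)) v) T with hz
      rcases eq_or_ne z 0 with h | h
      · rw [h]; push_cast; ring
      · have hc := (hA (i+1) T h).1
        rw [hc]
        push_cast
        ring
  have hNil : (Yop^(s0+1)) v = 0 := by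
    funext T
    by_contra h
    have := (hA (s0+1) T h).2
    omega
  by_contra hv
  have hex : ∃ i, (Yop^i) v = 0 := ⟨s0+1, hNil⟩
  set p := Nat.find hex with hp
  have hps : (Yop^p) v = 0 := Nat.find_spec hex
  have hp0 : p ≠ 0 := by
    intro h0
    rw [h0, pow_zero] at hps
    exact hv (by simpa using hps)
  have hmin : ¬ ((Yop^(p-1)) v = 0) := Nat.find_min hex (by omega)
  have hBB := hB (p-1)
  have hpe : p - 1 + 1 = p := by omega
  rw [hpe, hps, map_zero] at hBB
  have := (smul_eq_zero.1 hBB.symm).resolve_right hmin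
  rcases mul_eq_zero.1 this with h | h
  · have : (0:ℚ) < ((p-1:ℕ):ℚ) + 1 := by positivity
    linarith
  · have : (0:ℚ) ≤ ((p-1:ℕ):ℚ) := Nat.cast_nonneg _
    linarith [sub_eq_zero.1 h]

def boxSet (m j s : ℕ) : Finset (Finset ℕ) :=
  ((Finset.range m).powerset).filter (fun T => T.card = j ∧ wsum T = s)

lemma mem_boxSet {m j s : ℕ} {T : Finset ℕ} :
    T ∈ boxSet m j s ↔ T ⊆ Finset.range m ∧ T.card = j ∧ wsum T = s := by
  simp [boxSet, Finset.mem_powerset, and_assoc]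

lemma cwt_of_boxSet {m j s : ℕ} {T : Finset ℕ} (h : T ∈ boxSet m j s) :
    cwt m T = 2*(s:ℚ) + j - j*m := by
  obtain ⟨hsub, hcard, hsum⟩ := mem_boxSet.1 h
  have h1 : cwt m T = 2*((wsum T : ℕ):ℚ) + (T.card:ℚ)*(1-(m:ℚ)) := by
    rw [cwt, wsum]
    push_cast
    rw [Finset.sum_sub_distrib, Finset.sum_add_distrib, Finset.sum_const, Finset.sum_const,
      ← Finset.mul_sum]
    simp only [nsmul_eq_mul, mul_one]
    ring
  rw [h1, hcard, hsum]
  ring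

lemma Xop_supp {m : ℕ} {f : Finset ℕ → ℚ} {T : Finset ℕ} (h : Xop m f T ≠ 0) :
    ∃ t ∈ dnSet T, ((m:ℚ) - t ≠ 0 ∧ f (dnMv T t) ≠ 0) := by
  rw [Xop_apply] at h
  obtain ⟨t, ht, hne⟩ := Finset.exists_ne_zero_of_sum_ne_zero h
  refine ⟨t, ht, ?_, ?_⟩
  · intro h0; exact hne (by rw [h0, zero_mul])
  · intro h0; exact hne (by rw [h0, mul_zero])

lemma box_step {m j s : ℕ} {T : Finset ℕ} {t : ℕ} (ht : t ∈ dnSet T)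
    (hco : (m:ℚ) - t ≠ 0) (hd : dnMv T t ∈ boxSet m j s) : T ∈ boxSet m j (s+1) := by
  obtain ⟨hsub, hcard, hsum⟩ := mem_boxSet.1 hd
  obtain ⟨hT, h0, hp⟩ := mem_dnSet.1 ht
  have htm : t ≠ m := fun h => hco (by rw [h]; ring)
  have htlt : t < m := by
    have : t - 1 ∈ Finset.range m := hsub (Finset.mem_insert_self _ _)
    rw [Finset.mem_range] at this
    omega
  refine mem_boxSet.2 ⟨?_, ?_, ?_⟩
  · intro x hx
    rcases eq_or_ne x t with rfl | hne
    · exact Finset.mem_range.2 htlt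
    · exact hsub (Finset.mem_insert_of_mem (Finset.mem_erase.2 ⟨hne, hx⟩))
  · rw [← card_dnMv ht]; exact hcard
  · have := wsum_dnMv ht
    omega

lemma card_boxSet_le (m j s : ℕ) (hγ : 2*(s:ℚ) + j - j*m < 0) :
    (boxSet m j s).card ≤ (boxSet m j (s+1)).card := by
  classical
  set A := boxSet m j s with hA
  set B := boxSet m j (s+1) with hB
  let ext : (↥A → ℚ) → (Finset ℕ → ℚ) :=
    fun g T => if h : T ∈ A then g ⟨T, h⟩ else 0
  have ext_add : ∀ g g', ext (g + g') = ext g + ext g' := by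
    intro g g'; funext T; simp only [ext, Pi.add_apply]
    split <;> simp
  have ext_smul : ∀ (c : ℚ) g, ext (c • g) = c • ext g := by
    intro c g; funext T; simp only [ext, Pi.smul_apply, smul_eq_mul]
    split <;> simp
  let Φ : (↥A → ℚ) →ₗ[ℚ] (↥B → ℚ) := {
    toFun := fun g b => Xop m (ext g) b.1
    map_add' := by
      intro g g'; funext b
      show Xop m (ext (g + g')) b.1 = Xop m (ext g) b.1 + Xop m (ext g') b.1
      rw [ext_add, map_add]
      simp
    map_smul' := by
      intro c g; funext b
      show Xop m (ext (c • g)) b.1 = c • Xop m (ext g) b.1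
      rw [ext_smul, map_smul]
      simp }
  have hΦinj : Function.Injective Φ := by
    rw [injective_iff_map_eq_zero]
    intro g hg
    have hXz : Xop m (ext g) = 0 := by
      funext T
      by_cases hTB : T ∈ B
      · have := congrFun hg ⟨T, hTB⟩
        exact this
      · by_contra hne
        obtain ⟨t, ht, hco, hfz⟩ := Xop_supp hne
        have hdA : dnMv T t ∈ A := by
          by_contra hdA
          exact hfz (by simp [ext, hdA])
        exact hTB (box_step ht hco hdA)
    have hez : ext g = 0 := by
      apply sl2_vanish m (ext g) (2*(s:ℚ) + j - j*m) s _ hXz hγ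
      intro T hne
      have hTA : T ∈ A := by
        by_contra hTA
        exact hne (by simp [ext, hTA])
      exact ⟨cwt_of_boxSet hTA, (mem_boxSet.1 hTA).2.2⟩
    funext x
    have := congrFun hez x.1
    simpa [ext, x.2] using this
  have h1 : A.card = Module.finrank ℚ (↥A → ℚ) := by
    rw [Module.finrank_pi, Fintype.card_coe]
  have h2 : B.card = Module.finrank ℚ (↥B → ℚ) := by
    rw [Module.finrank_pi, Fintype.card_coe]
  rw [h1, h2]
  exact LinearMap.finrank_le_finrank_of_injective hΦinj

lemma sum_range_getD (l : List ℕ) : ∑ i ∈ Finset.range l.length, l.getD i 0 = l.sum := by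
  induction l with
  | nil => simp
  | cons a tl ih =>
    rw [List.length_cons, Finset.sum_range_succ']
    simp only [List.getD_cons_succ, List.getD_cons_zero, List.sum_cons]
    omega

section BoxCount

variable {n : ℕ} (j k : ℕ)

def padded (π : n.Partition) : List ℕ :=
  List.replicate (j - Multiset.card π.parts) 0 ++ Multiset.sort π.parts (· ≤ ·)

lemma padded_length (π : n.Partition) (hc : Multiset.card π.parts ≤ j) :
    (padded j π).length = j := by
  simp only [padded, List.length_append, List.length_replicate, Multiset.length_sort]
  omega

lemma padded_sorted (π : n.Partition) : (padded j π).Pairwise (· ≤ ·) := by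
  rw [padded, List.pairwise_append]
  refine ⟨List.pairwise_replicate.2 (Or.inr (le_refl 0)), Multiset.pairwise_sort _ _, ?_⟩
  intro a ha b _
  rw [List.eq_of_mem_replicate ha]
  exact Nat.zero_le b

lemma padded_mset (π : n.Partition) :
    ((padded j π : List ℕ) : Multiset ℕ)
      = Multiset.replicate (j - Multiset.card π.parts) 0 + π.parts := by
  rw [padded, ← Multiset.coe_add, Multiset.coe_replicate, Multiset.sort_eq]

lemma mem_padded {π : n.Partition} {x : ℕ} (hx : x ∈ padded j π) : x = 0 ∨ x ∈ π.parts := by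
  have : x ∈ ((padded j π : List ℕ) : Multiset ℕ) := by exact_mod_cast hx
  rw [padded_mset] at this
  rcases Multiset.mem_add.1 this with h | h
  · exact Or.inl (Multiset.eq_of_mem_replicate h)
  · exact Or.inr h

lemma padded_sum (π : n.Partition) : (padded j π).sum = n := by
  have h1 : ((padded j π : List ℕ) : Multiset ℕ).sum = (padded j π).sum := by
    simp [Multiset.sum_coe]
  rw [padded_mset] at h1
  rw [← h1, Multiset.sum_add, Multiset.sum_replicate, π.parts_sum]
  simp

def fPi (π : n.Partition) : Fin j → ℕ := fun i => (padded j π).getD i 0 + i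

lemma fPi_strictMono (π : n.Partition) (hc : Multiset.card π.parts ≤ j) :
    StrictMono (fPi j π) := by
  intro a b hab
  have hlen := padded_length j π hc
  have ha : (a : ℕ) < (padded j π).length := by rw [hlen]; exact a.2
  have hb : (b : ℕ) < (padded j π).length := by rw [hlen]; exact b.2
  have : (padded j π).getD a 0 ≤ (padded j π).getD b 0 := by
    rw [List.getD_eq_getElem _ _ ha, List.getD_eq_getElem _ _ hb]
    exact (padded_sorted j π).rel_get_of_le (by exact_mod_cast le_of_lt hab)
  have hab' : (a : ℕ) < b := hab
  simp only [fPi]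
  omega

lemma fPi_lt (π : n.Partition) (hc : Multiset.card π.parts ≤ j)
    (hk : ∀ i ∈ π.parts, i ≤ k) (i : Fin j) : fPi j π i < j + k := by
  have hlen := padded_length j π hc
  have hi : (i : ℕ) < (padded j π).length := by rw [hlen]; exact i.2
  have hmem : (padded j π).getD i 0 ∈ padded j π := by
    rw [List.getD_eq_getElem _ _ hi]
    exact List.getElem_mem _
  have : (padded j π).getD i 0 ≤ k := by
    rcases mem_padded j hmem with h | h
    · omega
    · exact hk _ h
  have := i.2
  simp only [fPi]
  omega

end BoxCount

lemma strictMono_add_le {j : ℕ} {f : Fin j → ℕ} (hf : StrictMono f) :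
    ∀ (d : ℕ) (a b : Fin j), (a:ℕ) + d = (b:ℕ) → f a + d ≤ f b := by
  intro d
  induction d with
  | zero =>
    intro a b hab
    have : a = b := Fin.ext (by omega)
    rw [this]
    omega
  | succ d ih =>
    intro a b hab
    have hd : (a:ℕ) + d < j := by have := b.2; omega
    have h1 := ih a ⟨(a:ℕ)+d, hd⟩ rfl
    have h2 : f ⟨(a:ℕ)+d, hd⟩ < f b := by
      apply hf
      rw [Fin.lt_def]
      simp only []
      omega
    omega

def phiMap (j : ℕ) {n : ℕ} (π : n.Partition) : Finset ℕ := Finset.image (fPi j π) Finset.univ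

lemma phiMap_mem {n : ℕ} (j k : ℕ) (π : n.Partition) (hc : Multiset.card π.parts ≤ j)
    (hk : ∀ i ∈ π.parts, i ≤ k) :
    phiMap j π ∈ boxSet (j+k) j (n + ∑ i ∈ Finset.range j, i) := by
  have hinj := (fPi_strictMono j π hc).injective
  refine mem_boxSet.2 ⟨?_, ?_, ?_⟩
  · intro x hx
    obtain ⟨i, _, rfl⟩ := Finset.mem_image.1 hx
    exact Finset.mem_range.2 (fPi_lt j k π hc hk i)
  · rw [phiMap, Finset.card_image_of_injective _ hinj, Finset.card_univ, Fintype.card_fin]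
  · rw [phiMap, wsum, Finset.sum_image (fun a _ b _ h => hinj h)]
    have h1 : ∑ i : Fin j, fPi j π i
        = (∑ i : Fin j, (padded j π).getD i 0) + ∑ i : Fin j, (i:ℕ) := by
      rw [← Finset.sum_add_distrib]
      exact Finset.sum_congr rfl fun i _ => rfl
    have h2 : ∑ i : Fin j, (padded j π).getD i 0 = n := by
      rw [Fin.sum_univ_eq_sum_range (fun t => (padded j π).getD t 0) j]
      have hlen := padded_length j π hc
      calc ∑ i ∈ Finset.range j, (padded j π).getD i 0
          = ∑ i ∈ Finset.range (padded j π).length, (padded j π).getD i 0 := by rw [hlen]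
        _ = (padded j π).sum := sum_range_getD _
        _ = n := padded_sum j π
    have h3 : ∑ i : Fin j, (i:ℕ) = ∑ i ∈ Finset.range j, i :=
      Fin.sum_univ_eq_sum_range (fun t => t) j
    rw [h1, h2, h3]

lemma phiMap_injective {n : ℕ} (j : ℕ) (π π' : n.Partition)
    (hc : Multiset.card π.parts ≤ j) (hc' : Multiset.card π'.parts ≤ j)
    (h : phiMap j π = phiMap j π') : π = π' := by
  have hcard : (phiMap j π).card = j := by
    rw [phiMap, Finset.card_image_of_injective _ (fPi_strictMono j π hc).injective,
      Finset.card_univ, Fintype.card_fin]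
  have hu1 : fPi j π = (phiMap j π).orderEmbOfFin hcard :=
    Finset.orderEmbOfFin_unique hcard
      (fun x => Finset.mem_image_of_mem _ (Finset.mem_univ x)) (fPi_strictMono j π hc)
  have hu2 : fPi j π' = (phiMap j π).orderEmbOfFin hcard :=
    Finset.orderEmbOfFin_unique hcard
      (fun x => h ▸ Finset.mem_image_of_mem _ (Finset.mem_univ x)) (fPi_strictMono j π' hc')
  have hf : fPi j π = fPi j π' := hu1.trans hu2.symm
  have hpad : padded j π = padded j π' := by
    apply List.ext_getElem
    · rw [padded_length j π hc, padded_length j π' hc']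
    · intro i h1 h2
      have hij : i < j := by rw [padded_length j π hc] at h1; exact h1
      have := congrFun hf ⟨i, hij⟩
      simp only [fPi] at this
      rw [← List.getD_eq_getElem _ 0 h1, ← List.getD_eq_getElem _ 0 h2]
      omega
  have hmeq : Multiset.replicate (j - Multiset.card π.parts) 0 + π.parts
      = Multiset.replicate (j - Multiset.card π'.parts) 0 + π'.parts := by
    rw [← padded_mset, ← padded_mset, hpad]
  have hfilter := congrArg (Multiset.filter (fun x => 0 < x)) hmeq
  rw [Multiset.filter_add, Multiset.filter_add] at hfilter
  have hrep : ∀ (z : ℕ), Multiset.filter (fun x => 0 < x) (Multiset.replicate z (0:ℕ)) = 0 := by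
    intro z
    rw [Multiset.filter_eq_nil]
    intro a ha
    rw [Multiset.eq_of_mem_replicate ha]
    omega
  have hpp : Multiset.filter (fun x => 0 < x) π.parts = π.parts :=
    Multiset.filter_eq_self.2 (fun a ha => π.parts_pos ha)
  have hpp' : Multiset.filter (fun x => 0 < x) π'.parts = π'.parts :=
    Multiset.filter_eq_self.2 (fun a ha => π'.parts_pos ha)
  rw [hrep, hrep, hpp, hpp', zero_add, zero_add] at hfilter
  exact Nat.Partition.ext hfilter

lemma phiMap_surjective {n : ℕ} (j k : ℕ) (S : Finset ℕ)
    (hS : S ∈ boxSet (j+k) j (n + ∑ i ∈ Finset.range j, i)) :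
    ∃ π : n.Partition, (Multiset.card π.parts ≤ j ∧ ∀ i ∈ π.parts, i ≤ k) ∧ phiMap j π = S := by
  classical
  obtain ⟨hsub, hcard, hsum⟩ := mem_boxSet.1 hS
  set g : Fin j → ℕ := fun i => S.orderEmbOfFin hcard i with hg
  have hgmono : StrictMono g := (S.orderEmbOfFin hcard).strictMono
  have hgle : ∀ i : Fin j, (i:ℕ) ≤ g i := by
    intro i
    have h0 : (0:ℕ) < j := lt_of_le_of_lt (Nat.zero_le _) i.2
    have := strictMono_add_le hgmono i ⟨0, h0⟩ i (by simp)
    omega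
  have hglt : ∀ i : Fin j, g i < j + k := fun i =>
    Finset.mem_range.1 (hsub (Finset.orderEmbOfFin_mem S hcard i))
  have himg : Finset.image g Finset.univ = S := by
    rw [← Finset.coe_inj, Finset.coe_image, Finset.coe_univ, Set.image_univ]
    exact Finset.range_orderEmbOfFin S hcard
  set b : Fin j → ℕ := fun i => g i - i with hb
  have hbg : ∀ i : Fin j, b i + (i:ℕ) = g i := by
    intro i; have := hgle i; simp only [hb]; omega
  have hbk : ∀ i, b i ≤ k := by
    intro i
    have hj1 : j - 1 < j := by have := i.2; omega
    have hile : (i:ℕ) ≤ j - 1 := by have := i.2; omega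
    have hlast := strictMono_add_le hgmono (j - 1 - i) i ⟨j-1, hj1⟩ (by simp; omega)
    have := hglt ⟨j-1, hj1⟩
    simp only [hb]
    omega
  have hbmono : ∀ a c : Fin j, a ≤ c → b a ≤ b c := by
    intro a c hac
    have := strictMono_add_le hgmono ((c:ℕ) - (a:ℕ)) a c (by omega)
    have := hgle a
    simp only [hb]
    omega
  have hsumg : ∑ i : Fin j, g i = n + ∑ i ∈ Finset.range j, i := by
    rw [← hsum, wsum, ← himg, Finset.sum_image (fun a _ c _ h => hgmono.injective h)]
  have hsumb : (∑ i : Fin j, b i) = n := by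
    have h1 : ∑ i : Fin j, (b i + (i:ℕ)) = ∑ i : Fin j, g i :=
      Finset.sum_congr rfl fun i _ => hbg i
    rw [Finset.sum_add_distrib] at h1
    have h3 : ∑ i : Fin j, (i:ℕ) = ∑ i ∈ Finset.range j, i :=
      Fin.sum_univ_eq_sum_range (fun t => t) j
    set A := ∑ i : Fin j, b i
    set B := ∑ i : Fin j, (i:ℕ)
    set C := ∑ i : Fin j, g i
    set D := ∑ i ∈ Finset.range j, i
    omega
  set Lb : List ℕ := List.ofFn b with hLb
  have hLblen : Lb.length = j := List.length_ofFn (f := b)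
  set parts : Multiset ℕ := Multiset.filter (fun x => 0 < x) (↑Lb) with hparts
  have hfilternot : Multiset.filter (fun x => ¬ 0 < x) (↑Lb : Multiset ℕ)
      = Multiset.replicate (j - Multiset.card parts) 0 := by
    rw [Multiset.eq_replicate]
    constructor
    · have hadd := Multiset.filter_add_not (fun x => 0 < x) (↑Lb : Multiset ℕ)
      have hcc := congrArg Multiset.card hadd
      rw [Multiset.card_add] at hcc
      rw [← hparts] at hcc
      have : Multiset.card (↑Lb : Multiset ℕ) = j := by
        rw [Multiset.coe_card, hLblen]
      omega
    · intro x hx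
      have := Multiset.of_mem_filter hx
      omega
  have hmsetLb : (↑Lb : Multiset ℕ) = Multiset.replicate (j - Multiset.card parts) 0 + parts := by
    conv_lhs => rw [← Multiset.filter_add_not (fun x => 0 < x) (↑Lb : Multiset ℕ)]
    rw [hfilternot, hparts, add_comm]
  have hsumLb : Lb.sum = n := by
    rw [hLb, List.sum_ofFn, hsumb]
  have hpartssum : parts.sum = n := by
    have h2 := congrArg Multiset.sum (Multiset.filter_add_not (fun x => 0 < x) (↑Lb : Multiset ℕ))
    rw [Multiset.sum_add, hfilternot, Multiset.sum_replicate, smul_zero, add_zero] at h2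
    have h3 : (↑Lb : Multiset ℕ).sum = Lb.sum := by simp [Multiset.sum_coe]
    rw [h3, hsumLb] at h2
    exact h2
  refine ⟨⟨parts, fun h => Multiset.of_mem_filter h, hpartssum⟩, ⟨?_, ?_⟩, ?_⟩
  · have : Multiset.card parts ≤ Multiset.card (↑Lb : Multiset ℕ) :=
      Multiset.card_le_card (Multiset.filter_le _ _)
    rw [Multiset.coe_card, hLblen] at this
    exact this
  · intro x hx
    have hx2 : x ∈ (↑Lb : Multiset ℕ) := Multiset.mem_of_mem_filter hx
    have : x ∈ Lb := by exact_mod_cast hx2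
    rw [hLb, List.mem_ofFn] at this
    obtain ⟨i, rfl⟩ := this
    exact hbk i
  · -- phiMap j π₀ = S
    have hc0 : Multiset.card parts ≤ j := by
      have : Multiset.card parts ≤ Multiset.card (↑Lb : Multiset ℕ) :=
        Multiset.card_le_card (Multiset.filter_le _ _)
      rw [Multiset.coe_card, hLblen] at this
      exact this
    have hLbsorted : Lb.Pairwise (· ≤ ·) := by
      rw [hLb, List.pairwise_ofFn]
      intro a c hac
      exact hbmono a c (le_of_lt hac)
    have hpadeq : padded j ⟨parts, fun h => Multiset.of_mem_filter h, hpartssum⟩ = Lb := by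
      apply List.Perm.eq_of_pairwise' (padded_sorted _ _) hLbsorted
      rw [← Multiset.coe_eq_coe, padded_mset]
      exact hmsetLb.symm
    rw [phiMap, ← himg]
    apply Finset.image_congr
    intro i _
    simp only [fPi, hpadeq]
    have hilt : (i:ℕ) < Lb.length := by rw [hLblen]; exact i.2
    rw [List.getD_eq_getElem _ 0 hilt]
    simp only [hLb, List.getElem_ofFn, Fin.eta]
    exact hbg i


/-- `boxPartitions k j n` : the number of partitions of `n` into at most `j` parts,
with each part at most `k`. -/
noncomputable def boxPartitions (k j n : ℕ) : ℕ :=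
  Nat.card {π : n.Partition // Multiset.card π.parts ≤ j ∧ ∀ i ∈ π.parts, i ≤ k}

lemma boxPartitions_eq_card (k j n : ℕ) :
    boxPartitions k j n = (boxSet (j+k) j (n + ∑ i ∈ Finset.range j, i)).card := by
  classical
  rw [boxPartitions, ← Nat.card_eq_finsetCard]
  apply Nat.card_congr
  refine Equiv.ofBijective
    (fun π => ⟨phiMap j π.1, phiMap_mem j k π.1 π.2.1 π.2.2⟩) ⟨?_, ?_⟩
  · intro π π' h
    exact Subtype.ext (phiMap_injective j π.1 π'.1 π.2.1 π'.2.1 (congrArg Subtype.val h))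
  · rintro ⟨S, hS⟩
    obtain ⟨π, hcond, hphi⟩ := phiMap_surjective j k S hS
    exact ⟨⟨π, hcond⟩, Subtype.ext hphi⟩

/-- Unimodality of the Gaussian binomial coefficients up to the middle:
`p(k, j, n-1) ≤ p(k, j, n)` for `n ≤ jk/2`. -/
theorem stmt_16 (j k n : ℕ) (hn : n ≤ j * k / 2) :
    boxPartitions k j (n - 1) ≤ boxPartitions k j n := by
  rcases Nat.eq_zero_or_pos n with rfl | hn1
  · exact le_refl _
  have h2n : 2 * n ≤ j * k := by
    have := (Nat.le_div_iff_mul_le (show 0 < 2 by norm_num)).1 hn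
    omega
  have hj1 : 1 ≤ j := by
    by_contra h
    have hj0 : j = 0 := by omega
    rw [hj0] at h2n
    omega
  set off := ∑ i ∈ Finset.range j, i with hoff
  have hoff2 : 2 * off = j * (j - 1) := by
    have := Finset.sum_range_id_mul_two j
    omega
  have hoffq : 2*(off:ℚ) = (j:ℚ)*((j:ℚ)-1) := by
    have : ((2 * off : ℕ):ℚ) = ((j * (j-1) : ℕ):ℚ) := by rw [hoff2]
    push_cast [Nat.cast_sub hj1] at this
    linarith
  have hγ : 2*(((n-1+off):ℕ):ℚ) + (j:ℚ) - (j:ℚ)*(((j+k):ℕ):ℚ) < 0 := by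
    have hcast : 2*(n:ℚ) ≤ (j:ℚ)*(k:ℚ) := by exact_mod_cast h2n
    push_cast [Nat.cast_sub (show 1 ≤ n from hn1)]
    nlinarith [hoffq, hcast]
  have hle := card_boxSet_le (j+k) j (n-1+off) hγ
  have hstep : n - 1 + off + 1 = n + off := by omega
  rw [hstep] at hle
  rw [boxPartitions_eq_card k j (n-1), boxPartitions_eq_card k j n]
  exact hle
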